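/- Let p, q, r be positive integers and let M_{p,q,r} = ∑_{i=1}^p ∑_{j=1}^q ∑_{k=1}^r e_{i,j} ⊗ e_{j,k} ⊗ e_{k,i} ∈ ℂ^{p×q} ⊗ ℂ^{q×r} ⊗ ℂ^{r×p} be the matrix multiplication tensor. Then this decomposition is a diagonal singular value decomposition: the pqr-tuple of pure tensors (e_{i,j} ⊗ e_{j,k} ⊗ e_{k,i}) is 2-orthogonal, and the singular values of M_{p,q,r} are 1 with multiplicity pqr. -/

import Mathlib

noncomputable section

open Finset

/-- The third-order tensor space `A ⊗ B ⊗ C` (spaces given by orthonormal bases indexed by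
`A`, `B`, `C`), modeled as `EuclideanSpace ℂ (A × B × C)`. -/
abbrev T3 (A B C : Type*) [Fintype A] [Fintype B] [Fintype C] : Type _ :=
  EuclideanSpace ℂ (A × B × C)

variable {A B C : Type*} [Fintype A] [Fintype B] [Fintype C]

/-- The pure tensor `a ⊗ b ⊗ c`. -/
def pure3 (a : A → ℂ) (b : B → ℂ) (c : C → ℂ) : T3 A B C :=
  WithLp.toLp 2 (fun x : A × B × C => a x.1 * b x.2.1 * c x.2.2)

/-- A pure tensor in `A ⊗ B ⊗ C`. -/
def IsPure3 (T : T3 A B C) : Prop :=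
  ∃ (a : A → ℂ) (b : B → ℂ) (c : C → ℂ), ∀ x : A × B × C, T x = a x.1 * b x.2.1 * c x.2.2

/-- Nuclear norm of a tensor. -/
def nuclearNorm3 (T : T3 A B C) : ℝ :=
  sInf {c : ℝ | ∃ (r : ℕ) (v : Fin r → T3 A B C),
    (∀ i, IsPure3 (v i)) ∧ T = ∑ i, v i ∧ c = ∑ i, ‖v i‖}

/-- `[S]_α`. -/
def bracket3 {κ : Type*} [Fintype κ] (S : κ → T3 A B C) (α : ℝ) : ℝ :=
  sSup {c : ℝ | ∃ u : T3 A B C, IsPure3 u ∧ ‖u‖ = 1 ∧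
    c = (∑ i, ‖(inner ℂ (S i) u : ℂ)‖ ^ α) ^ (1 / α)}

/-- The spectral norm `[T]`. -/
def spectral3 (T : T3 A B C) : ℝ :=
  sSup {c : ℝ | ∃ u : T3 A B C, IsPure3 u ∧ ‖u‖ = 1 ∧ c = ‖(inner ℂ T u : ℂ)‖}

/-- `t`-orthogonality of a tuple of unit tensors. -/
def TOrtho3 {κ : Type*} [Fintype κ] (S : κ → T3 A B C) (t : ℝ) : Prop :=
  (∀ i, ‖S i‖ = 1) ∧ bracket3 S (2 / t) = 1

/-- A diagonal singular value decomposition of `T`: `T = ∑ i, σ i • v i` where all `σ i > 0`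
and `(v i)` is a `2`-orthogonal family of pure tensors of unit length.  (The singular values
of `T` are the `σ i`, with multiplicities.) -/
def IsDSVD3 {κ : Type*} [Fintype κ] (T : T3 A B C) (σ : κ → ℝ) (v : κ → T3 A B C) : Prop :=
  (∀ i, 0 < σ i) ∧ (∀ i, IsPure3 (v i)) ∧ TOrtho3 v 2 ∧ T = ∑ i, (σ i : ℂ) • v i

/-- The standard basis vector `e_a`. -/
def std {A : Type*} [DecidableEq A] (a : A) : A → ℂ := fun x => if x = a then 1 else 0

/-- The matrix multiplication tensor
`M_{p,q,r} = ∑_{i,j,k} e_{i,j} ⊗ e_{j,k} ⊗ e_{k,i} ∈ ℂ^{p×q} ⊗ ℂ^{q×r} ⊗ ℂ^{r×p}`. -/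
def matMulTensor (p q r : ℕ) : T3 (Fin p × Fin q) (Fin q × Fin r) (Fin r × Fin p) :=
  ∑ i : Fin p, ∑ j : Fin q, ∑ k : Fin r,
    pure3 (std (i, j)) (std (j, k)) (std (k, i))

/-- Auxiliary: Cauchy–Schwarz style bound for triple cyclic sums. -/
lemma cs3_aux {ι₁ ι₂ ι₃ : Type*} [Fintype ι₁] [Fintype ι₂] [Fintype ι₃]
    (F : ι₁ × ι₂ → ℝ) (G : ι₂ × ι₃ → ℝ) (H : ι₃ × ι₁ → ℝ) :
    ∑ w : ι₁ × ι₂ × ι₃, F (w.1, w.2.1) * G (w.2.1, w.2.2) * H (w.2.2, w.1)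
      ≤ Real.sqrt (∑ x, F x ^ 2) * (Real.sqrt (∑ x, G x ^ 2) * Real.sqrt (∑ x, H x ^ 2)) := by
  have h1 : ∑ w : ι₁ × ι₂ × ι₃, F (w.1, w.2.1) * G (w.2.1, w.2.2) * H (w.2.2, w.1)
      = ∑ z : ι₁ × ι₂, F z * (∑ k : ι₃, G (z.2, k) * H (k, z.1)) := by
    rw [Fintype.sum_prod_type]
    simp [Fintype.sum_prod_type, Finset.mul_sum, mul_assoc]
  rw [h1]
  have h2 : ∑ z : ι₁ × ι₂, F z * (∑ k : ι₃, G (z.2, k) * H (k, z.1))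
      ≤ Real.sqrt (∑ z : ι₁ × ι₂, F z ^ 2) *
        Real.sqrt (∑ z : ι₁ × ι₂, (∑ k : ι₃, G (z.2, k) * H (k, z.1)) ^ 2) :=
    Real.sum_mul_le_sqrt_mul_sqrt _ _ _
  refine h2.trans (mul_le_mul_of_nonneg_left ?_ (Real.sqrt_nonneg _))
  rw [← Real.sqrt_mul (by positivity)]
  apply Real.sqrt_le_sqrt
  calc ∑ z : ι₁ × ι₂, (∑ k : ι₃, G (z.2, k) * H (k, z.1)) ^ 2
      ≤ ∑ z : ι₁ × ι₂, (∑ k : ι₃, G (z.2, k) ^ 2) * (∑ k : ι₃, H (k, z.1) ^ 2) :=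
        Finset.sum_le_sum fun z _ => Finset.sum_mul_sq_le_sq_mul_sq _ _ _
    _ = (∑ x : ι₂ × ι₃, G x ^ 2) * ∑ x : ι₃ × ι₁, H x ^ 2 := by
        rw [Fintype.sum_prod_type, Fintype.sum_prod_type, Fintype.sum_prod_type]
        simp_rw [← Finset.sum_mul, ← Finset.mul_sum]
        congr 1
        exact Finset.sum_comm

/-- Auxiliary: a triple sum of a product factors. -/
lemma sum_prod3_aux {X Y Z : Type*} [Fintype X] [Fintype Y] [Fintype Z]
    (f : X → ℝ) (g : Y → ℝ) (h : Z → ℝ) :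
    ∑ x : X × Y × Z, f x.1 * g x.2.1 * h x.2.2
      = (∑ x, f x) * ((∑ y, g y) * (∑ z, h z)) := by
  simp_rw [Fintype.sum_prod_type, mul_assoc, ← Finset.mul_sum, ← Finset.sum_mul]

/-- Auxiliary: a pure tensor of standard basis vectors is a standard basis vector. -/
lemma pure3_std_eq_single {A B C : Type*} [Fintype A] [Fintype B] [Fintype C]
    [DecidableEq A] [DecidableEq B] [DecidableEq C] (a : A) (b : B) (c : C) :
    pure3 (std a) (std b) (std c) = EuclideanSpace.single ((a, b, c) : A × B × C) (1 : ℂ) := by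
  ext x
  obtain ⟨x1, x2, x3⟩ := x
  simp only [pure3, std, PiLp.toLp_apply, EuclideanSpace.single_apply, Prod.mk.injEq]
  by_cases h1 : x1 = a <;> by_cases h2 : x2 = b <;> by_cases h3 : x3 = c <;>
    simp [h1, h2, h3]

/-- The index map `(i,j,k) ↦ ((i,j),(j,k),(k,i))`. -/
def idxP (p q r : ℕ) : Fin p × Fin q × Fin r →
    (Fin p × Fin q) × (Fin q × Fin r) × (Fin r × Fin p) :=
  fun w => ((w.1, w.2.1), (w.2.1, w.2.2), (w.2.2, w.1))

lemma idxP_inj (p q r : ℕ) : Function.Injective (idxP p q r) := by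
  rintro ⟨i, j, k⟩ ⟨i', j', k'⟩ h
  simp only [idxP, Prod.mk.injEq] at h
  obtain ⟨⟨h1, h2⟩, ⟨h3, h4⟩, h5, h6⟩ := h
  subst h1; subst h2; subst h4; rfl

lemma inner_pure3_std {p q r : ℕ} (w : Fin p × Fin q × Fin r)
    (u : T3 (Fin p × Fin q) (Fin q × Fin r) (Fin r × Fin p)) :
    (inner ℂ (pure3 (std (w.1, w.2.1)) (std (w.2.1, w.2.2)) (std (w.2.2, w.1))) u : ℂ)
      = u (idxP p q r w) := by
  rw [pure3_std_eq_single, EuclideanSpace.inner_single_left]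
  simp [idxP]

/-- Auxiliary: key bound for pure unit tensors. -/
lemma key_bound {p q r : ℕ} (u : T3 (Fin p × Fin q) (Fin q × Fin r) (Fin r × Fin p))
    (hu : IsPure3 u) (hn : ‖u‖ = 1) :
    ∑ w : Fin p × Fin q × Fin r, ‖u (idxP p q r w)‖ ≤ 1 := by
  obtain ⟨a, b, c, h⟩ := hu
  have hnorm : ‖u‖ = Real.sqrt (∑ x, ‖a x‖ ^ 2) *
      (Real.sqrt (∑ x, ‖b x‖ ^ 2) * Real.sqrt (∑ x, ‖c x‖ ^ 2)) := by
    rw [EuclideanSpace.norm_eq, ← Real.sqrt_mul (by positivity), ← Real.sqrt_mul (by positivity)]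
    congr 1
    rw [← sum_prod3_aux (fun x => ‖a x‖ ^ 2) (fun y => ‖b y‖ ^ 2) (fun z => ‖c z‖ ^ 2)]
    refine Finset.sum_congr rfl fun x _ => ?_
    rw [h x, norm_mul, norm_mul, mul_pow, mul_pow]
  calc ∑ w : Fin p × Fin q × Fin r, ‖u (idxP p q r w)‖
      = ∑ w : Fin p × Fin q × Fin r,
          ‖a (w.1, w.2.1)‖ * ‖b (w.2.1, w.2.2)‖ * ‖c (w.2.2, w.1)‖ := by
        refine Finset.sum_congr rfl fun w _ => ?_
        rw [show u (idxP p q r w) = u ((w.1, w.2.1), (w.2.1, w.2.2), (w.2.2, w.1)) from rfl,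
          h ((w.1, w.2.1), (w.2.1, w.2.2), (w.2.2, w.1)), norm_mul, norm_mul]
    _ ≤ Real.sqrt (∑ x, ‖a x‖ ^ 2) *
        (Real.sqrt (∑ x, ‖b x‖ ^ 2) * Real.sqrt (∑ x, ‖c x‖ ^ 2)) :=
        cs3_aux (fun z => ‖a z‖) (fun z => ‖b z‖) (fun z => ‖c z‖)
    _ = 1 := by rw [← hnorm, hn]

/-- **Theorem 1.8.** The decomposition `M_{p,q,r} = ∑_{i,j,k} e_{i,j} ⊗ e_{j,k} ⊗ e_{k,i}`
is a diagonal singular value decomposition: the `pqr`-tuple of pure tensors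
`(e_{i,j} ⊗ e_{j,k} ⊗ e_{k,i})` is `2`-orthogonal, and the singular values of `M_{p,q,r}`
are `1` with multiplicity `pqr`. -/
theorem matMulTensor_isDSVD (p q r : ℕ) (hp : 0 < p) (hq : 0 < q) (hr : 0 < r) :
    IsDSVD3 (matMulTensor p q r)
      (fun _ : Fin p × Fin q × Fin r => (1 : ℝ))
      (fun w => pure3 (std (w.1, w.2.1)) (std (w.2.1, w.2.2)) (std (w.2.2, w.1))) := by
  have hv : ∀ w : Fin p × Fin q × Fin r,
      pure3 (std (w.1, w.2.1)) (std (w.2.1, w.2.2)) (std (w.2.2, w.1))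
        = EuclideanSpace.single (idxP p q r w) (1 : ℂ) := fun w =>
    pure3_std_eq_single (w.1, w.2.1) (w.2.1, w.2.2) (w.2.2, w.1)
  refine ⟨fun _ => one_pos, fun w => ⟨std (w.1, w.2.1), std (w.2.1, w.2.2), std (w.2.2, w.1), fun _ => rfl⟩, ⟨?_, ?_⟩, ?_⟩
  · intro w
    show ‖pure3 (std (w.1, w.2.1)) (std (w.2.1, w.2.2)) (std (w.2.2, w.1))‖ = 1
    rw [hv w, EuclideanSpace.norm_single]
    exact norm_one
  · -- bracket3 v (2/2) = 1
    unfold bracket3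
    simp only [show (2 : ℝ) / 2 = 1 from by norm_num, Real.rpow_one, one_div_one,
      inner_pure3_std]
    set S : Set ℝ := {c : ℝ | ∃ u : T3 (Fin p × Fin q) (Fin q × Fin r) (Fin r × Fin p),
        IsPure3 u ∧ ‖u‖ = 1 ∧ c = ∑ w : Fin p × Fin q × Fin r, ‖u (idxP p q r w)‖} with hS
    show sSup S = 1
    set w₀ : Fin p × Fin q × Fin r := (⟨0, hp⟩, ⟨0, hq⟩, ⟨0, hr⟩) with hw₀
    set u₀ : T3 (Fin p × Fin q) (Fin q × Fin r) (Fin r × Fin p) :=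
      pure3 (std (w₀.1, w₀.2.1)) (std (w₀.2.1, w₀.2.2)) (std (w₀.2.2, w₀.1)) with hu₀
    have hu₀pure : IsPure3 u₀ := ⟨_, _, _, fun _ => rfl⟩
    have hu₀norm : ‖u₀‖ = 1 := by rw [hu₀, hv w₀, EuclideanSpace.norm_single]; exact norm_one
    have hu₀sum : ∑ w : Fin p × Fin q × Fin r, ‖u₀ (idxP p q r w)‖ = 1 := by
      have heq : ∀ w : Fin p × Fin q × Fin r,
          ‖u₀ (idxP p q r w)‖ = if w = w₀ then 1 else 0 := by
        intro w
        rw [hu₀, hv w₀]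
        rw [EuclideanSpace.single_apply]
        by_cases hw : w = w₀
        · simp [hw]
        · have hne : ¬ (idxP p q r w = idxP p q r w₀) := fun h => hw (idxP_inj p q r h)
          simp [hne, hw]
      simp_rw [heq]
      simp
    have hmem : (1 : ℝ) ∈ S := ⟨u₀, hu₀pure, hu₀norm, hu₀sum.symm⟩
    have hub : ∀ c ∈ S, c ≤ 1 := by
      rintro c ⟨u, hu, hn, rfl⟩
      exact key_bound u hu hn
    exact le_antisymm (csSup_le ⟨1, hmem⟩ hub) (le_csSup ⟨1, hub⟩ hmem)
  · -- the sum decomposition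
    simp only [Complex.ofReal_one, one_smul]
    rw [matMulTensor, Fintype.sum_prod_type]
    exact Finset.sum_congr rfl fun i _ => by rw [Fintype.sum_prod_type]
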